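/- (Covariance of unique-reach indicators.) In the uniform group-request model, let R_i = min(X_i, 1). For two distinct users i and i′ let G_∩ = G_i ∩ G_{i′} and G_∪ = G_i ∪ G_{i′}. Then Cov[R_i, R_{i′}] = ( (1 − 2/k)^{∑_{j ∈ G_∩} n_j} − (1 − 1/k)^{2 ∑_{j ∈ G_∩} n_j} ) · (1 − 1/k)^{∑_{j ∈ G_∪ \ G_∩} n_j}. -/

import Mathlib

open MeasureTheory Finset

noncomputable section

/-- The p.m.f. of the Binomial(n, p) distribution, `f(x; n, p)`,
extended by `0` for `x > n` (since `n.choose x = 0` there). -/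
def binPMF (x n : ℕ) (p : ℝ) : ℝ := (n.choose x : ℝ) * p ^ x * (1 - p) ^ (n - x)

/-- The c.d.f. of the Binomial(n, p) distribution, `F(x; n, p) = ∑_{l=0}^x f(l; n, p)`. -/
def binCDF (x n : ℕ) (p : ℝ) : ℝ := ∑ l ∈ Finset.range (x + 1), binPMF l n p

/-- `X_i(ω)`: the number of requests generated by user `i` in the trajectory `ω`,
where `ω t` is the user generating request `t`. -/
def reqCount {T : ℕ} (i : ℕ) (ω : Fin T → ℕ) : ℕ :=
  (Finset.univ.filter fun t => ω t = i).card

/-- `n_j`: the number of requests originating from group `j`, where `gidx t` is the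
index of the group generating request `t`. -/
def nreq {M T : ℕ} (gidx : Fin T → Fin M) (j : Fin M) : ℕ :=
  (Finset.univ.filter fun t => gidx t = j).card

/-- `G_i`: the set of indices of groups containing user `i`. -/
def Gset {M : ℕ} (Grp : Fin M → Finset ℕ) (i : ℕ) : Finset (Fin M) :=
  Finset.univ.filter fun j => i ∈ Grp j

/-- `∑_{j ∈ G_i} n_j`: the total number of requests from groups containing user `i`. -/
def totImp {M T : ℕ} (Grp : Fin M → Finset ℕ) (gidx : Fin T → Fin M) (i : ℕ) : ℕ :=
  ∑ j ∈ Gset Grp i, nreq gidx j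

/-- The uniform group-request model: each of the `T` requests is independently generated
by a user chosen uniformly at random from the group it originates from, each group being
a finite set of users of cardinality `k`.  This is the product of the uniform measures
on the groups `Grp (gidx t)`, a probability measure on trajectories `ω : Fin T → ℕ`. -/
def reqMeasure {M T k : ℕ} (hk : 0 < k) (Grp : Fin M → Finset ℕ)
    (hcard : ∀ j, (Grp j).card = k) (gidx : Fin T → Fin M) : Measure (Fin T → ℕ) :=
  Measure.pi fun t => (PMF.uniformOfFinset (Grp (gidx t))
    (Finset.card_pos.mp (by rw [hcard (gidx t)]; exact hk))).toMeasure

/-- `R_i(ω) = min(X_i(ω), 1)`: the indicator that user `i` is reached at least once. -/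
def reachInd {T : ℕ} (i : ℕ) (ω : Fin T → ℕ) : ℝ := ((min (reqCount i ω) 1 : ℕ) : ℝ)


section Helpers

open scoped ENNReal

private lemma my_integral_pi {ι : Type*} [Fintype ι] {E : ι → Type*} [∀ i, MeasurableSpace (E i)]
    (μ : ∀ i, Measure (E i)) [∀ i, IsProbabilityMeasure (μ i)] (f : ∀ i, E i → ℝ) :
    ∫ x, ∏ i, f i (x i) ∂(Measure.pi μ) = ∏ i, ∫ x, f i x ∂(μ i) := by
  letI : ∀ i, MeasureSpace (E i) := fun i => ⟨μ i⟩
  haveI : ∀ i, SigmaFinite (volume : Measure (E i)) := fun i => inferInstanceAs (SigmaFinite (μ i))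
  exact MeasureTheory.integral_fintype_prod_eq_prod f

private lemma my_integrable_pi {ι : Type*} [Fintype ι] {E : ι → Type*} [∀ i, MeasurableSpace (E i)]
    (μ : ∀ i, Measure (E i)) [∀ i, IsProbabilityMeasure (μ i)] (f : ∀ i, E i → ℝ)
    (hf : ∀ i, Integrable (f i) (μ i)) :
    Integrable (fun x => ∏ i, f i (x i)) (Measure.pi μ) := by
  letI : ∀ i, MeasureSpace (E i) := fun i => ⟨μ i⟩
  haveI : ∀ i, SigmaFinite (volume : Measure (E i)) := fun i => inferInstanceAs (SigmaFinite (μ i))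
  exact Integrable.fintype_prod_dep hf

private lemma my_integrable_ite (μ : Measure ℕ) [IsFiniteMeasure μ] (A : Finset ℕ) :
    Integrable (fun x => if x ∈ A then (0:ℝ) else 1) μ := by
  have hind : (fun x : ℕ => if x ∈ A then (0:ℝ) else 1)
      = Set.indicator (↑A)ᶜ (1 : ℕ → ℝ) := by
    funext x; by_cases hx : x ∈ A <;> simp [Set.indicator, hx]
  rw [hind]
  exact (integrable_const 1).indicator MeasurableSet.of_discrete

private lemma my_integral_uniform (s : Finset ℕ) (hs : s.Nonempty) (A : Finset ℕ) :
    ∫ x, (if x ∈ A then (0:ℝ) else 1) ∂(PMF.uniformOfFinset s hs).toMeasure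
      = 1 - ((s.filter (· ∈ A)).card : ℝ) / s.card := by
  classical
  have hind : (fun x : ℕ => if x ∈ A then (0:ℝ) else 1)
      = Set.indicator (↑A)ᶜ (1 : ℕ → ℝ) := by
    funext x; by_cases hx : x ∈ A <;> simp [Set.indicator, hx]
  rw [hind, integral_indicator_one (MeasurableSet.of_discrete)]
  have hμ : (PMF.uniformOfFinset s hs).toMeasure (↑A : Set ℕ)
      = ((s.filter (· ∈ (A : Set ℕ))).card : ℝ≥0∞) / s.card :=
    (PMF.toMeasure_uniformOfFinset_apply hs _ MeasurableSet.of_discrete).trans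
      (by congr 1; exact_mod_cast congrArg Finset.card (Finset.filter_congr_decidable ..))
  have hcompl : (PMF.uniformOfFinset s hs).toMeasure ((↑A : Set ℕ))ᶜ
      = 1 - (PMF.toMeasure (PMF.uniformOfFinset s hs)) (↑A : Set ℕ) :=
    prob_compl_eq_one_sub MeasurableSet.of_discrete
  rw [measureReal_def, hcompl, hμ]
  have hle : ((s.filter (· ∈ (A : Set ℕ))).card : ℝ≥0∞) / s.card ≤ 1 := by
    apply ENNReal.div_le_of_le_mul
    simp only [one_mul]
    exact_mod_cast Nat.cast_le.mpr (Finset.card_filter_le _ _)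
  rw [ENNReal.toReal_sub_of_le hle (by simp), ENNReal.toReal_div]
  norm_num

private lemma my_reachInd_eq {T : ℕ} (i : ℕ) (ω : Fin T → ℕ) :
    reachInd i ω = 1 - ∏ t, (if ω t ∈ ({i} : Finset ℕ) then (0:ℝ) else 1) := by
  classical
  unfold reachInd
  by_cases h : ∃ t, ω t = i
  · obtain ⟨t, ht⟩ := h
    have h1 : ∏ t, (if ω t ∈ ({i} : Finset ℕ) then (0:ℝ) else 1) = 0 :=
      Finset.prod_eq_zero (Finset.mem_univ t) (by simp [ht])
    have h2 : min (reqCount i ω) 1 = 1 := by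
      have : 0 < reqCount i ω := Finset.card_pos.mpr ⟨t, by simp [ht]⟩
      omega
    rw [h1, h2]; norm_num
  · push_neg at h
    have h1 : ∏ t, (if ω t ∈ ({i} : Finset ℕ) then (0:ℝ) else 1) = 1 :=
      Finset.prod_eq_one (fun t _ => by simp [h t])
    have h2 : reqCount i ω = 0 := by
      simp only [reqCount, Finset.card_eq_zero]
      exact Finset.filter_eq_empty_iff.mpr (fun t _ => h t)
    rw [h1, h2]; norm_num

end Helpers

/-- Covariance of unique-reach indicators: In the uniform group-request
model, for two distinct users `i ≠ i'`, with `G_∩ = G_i ∩ G_{i'}`, `G_∪ = G_i ∪ G_{i'}`,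
`Cov[R_i, R_{i'}] = ((1 − 2/k)^{∑_{j∈G_∩} n_j} − (1 − 1/k)^{2∑_{j∈G_∩} n_j})
  · (1 − 1/k)^{∑_{j ∈ G_∪ \ G_∩} n_j}`,
where the covariance is `E[R_i R_{i'}] − E[R_i]·E[R_{i'}]`. -/
theorem covariance_unique_reach {M T k : ℕ} (hk : 0 < k) (Grp : Fin M → Finset ℕ)
    (hcard : ∀ j, (Grp j).card = k) (gidx : Fin T → Fin M) (i i' : ℕ) (hii' : i ≠ i') :
    (∫ ω, reachInd i ω * reachInd i' ω ∂(reqMeasure hk Grp hcard gidx))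
        - (∫ ω, reachInd i ω ∂(reqMeasure hk Grp hcard gidx))
          * (∫ ω, reachInd i' ω ∂(reqMeasure hk Grp hcard gidx))
      = ((1 - 2 / (k : ℝ)) ^ (∑ j ∈ Gset Grp i ∩ Gset Grp i', nreq gidx j)
          - (1 - 1 / (k : ℝ)) ^ (2 * ∑ j ∈ Gset Grp i ∩ Gset Grp i', nreq gidx j))
        * (1 - 1 / (k : ℝ))
            ^ (∑ j ∈ (Gset Grp i ∪ Gset Grp i') \ (Gset Grp i ∩ Gset Grp i'),
                nreq gidx j) := by
  classical
  have hne : ∀ t : Fin T, (Grp (gidx t)).Nonempty := fun t =>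
    Finset.card_pos.mp (by rw [hcard (gidx t)]; exact hk)
  set μt : Fin T → Measure ℕ :=
    fun t => (PMF.uniformOfFinset (Grp (gidx t)) (hne t)).toMeasure with hμt
  haveI : ∀ t, IsProbabilityMeasure (μt t) := fun t => PMF.toMeasure.isProbabilityMeasure _
  have hmeas : reqMeasure hk Grp hcard gidx = Measure.pi μt := rfl
  set fA : Fin T → ℕ → ℝ := fun _ x => if x ∈ ({i} : Finset ℕ) then 0 else 1 with hfA
  set fB : Fin T → ℕ → ℝ := fun _ x => if x ∈ ({i'} : Finset ℕ) then 0 else 1 with hfB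
  set fQ : Fin T → ℕ → ℝ := fun _ x => if x ∈ ({i, i'} : Finset ℕ) then 0 else 1 with hfQ
  have iA : Integrable (fun ω => ∏ t, fA t (ω t)) (Measure.pi μt) :=
    my_integrable_pi μt fA (fun t => my_integrable_ite _ _)
  have iB : Integrable (fun ω => ∏ t, fB t (ω t)) (Measure.pi μt) :=
    my_integrable_pi μt fB (fun t => my_integrable_ite _ _)
  have iQ : Integrable (fun ω => ∏ t, fQ t (ω t)) (Measure.pi μt) :=
    my_integrable_pi μt fQ (fun t => my_integrable_ite _ _)
  -- per-group constants
  set cA : Fin M → ℝ := fun j => 1 - (if i ∈ Grp j then (1:ℝ) else 0) / k with hcA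
  set cB : Fin M → ℝ := fun j => 1 - (if i' ∈ Grp j then (1:ℝ) else 0) / k with hcB
  set cQ : Fin M → ℝ :=
    fun j => 1 - ((if i ∈ Grp j then (1:ℝ) else 0) + (if i' ∈ Grp j then 1 else 0)) / k with hcQ
  -- single-coordinate integrals
  have hcard1 : ∀ (s : Finset ℕ) (a : ℕ),
      ((s.filter (· ∈ ({a} : Finset ℕ))).card : ℝ) = if a ∈ s then 1 else 0 := by
    intro s a
    rw [show (s.filter (· ∈ ({a} : Finset ℕ))) = s.filter (· = a) from by simp,
      Finset.filter_eq']
    split <;> simp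
  have hcard2 : ∀ (s : Finset ℕ),
      ((s.filter (· ∈ ({i, i'} : Finset ℕ))).card : ℝ)
        = (if i ∈ s then 1 else 0) + (if i' ∈ s then 1 else 0) := by
    intro s
    have hsplit : s.filter (· ∈ ({i, i'} : Finset ℕ))
        = s.filter (· = i) ∪ s.filter (· = i') := by
      rw [← Finset.filter_or]
      apply Finset.filter_congr
      intro x _; simp [Finset.mem_insert, Finset.mem_singleton]
    have hdisj : Disjoint (s.filter (· = i)) (s.filter (· = i')) := by
      rw [Finset.disjoint_left]
      intro a ha ha'
      simp only [Finset.mem_filter] at ha ha'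
      exact hii' (ha.2 ▸ ha'.2 ▸ rfl)
    rw [hsplit, Finset.card_union_of_disjoint hdisj]
    push_cast
    rw [Finset.filter_eq', Finset.filter_eq']
    congr 1 <;> split <;> simp
  have hIA : ∀ t, ∫ x, fA t x ∂(μt t) = cA (gidx t) := by
    intro t
    rw [hμt, my_integral_uniform, hcard1, hcard (gidx t)]
  have hIB : ∀ t, ∫ x, fB t x ∂(μt t) = cB (gidx t) := by
    intro t
    rw [hμt, my_integral_uniform, hcard1, hcard (gidx t)]
  have hIQ : ∀ t, ∫ x, fQ t x ∂(μt t) = cQ (gidx t) := by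
    intro t
    rw [hμt, my_integral_uniform, hcard2, hcard (gidx t)]
  -- products over requests become products over groups
  have hfib : ∀ c : Fin M → ℝ, ∏ t, c (gidx t) = ∏ j, c j ^ (nreq gidx j) := by
    intro c
    rw [← Finset.prod_fiberwise' Finset.univ gidx c]
    exact Finset.prod_congr rfl fun j _ => by rw [Finset.prod_const]; rfl
  have hPA : ∫ ω, ∏ t, fA t (ω t) ∂(Measure.pi μt) = ∏ j, cA j ^ (nreq gidx j) := by
    rw [my_integral_pi, Finset.prod_congr rfl fun t _ => hIA t, hfib]
  have hPB : ∫ ω, ∏ t, fB t (ω t) ∂(Measure.pi μt) = ∏ j, cB j ^ (nreq gidx j) := by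
    rw [my_integral_pi, Finset.prod_congr rfl fun t _ => hIB t, hfib]
  have hPQ : ∫ ω, ∏ t, fQ t (ω t) ∂(Measure.pi μt) = ∏ j, cQ j ^ (nreq gidx j) := by
    rw [my_integral_pi, Finset.prod_congr rfl fun t _ => hIQ t, hfib]
  -- expectations
  have hEi : ∫ ω, reachInd i ω ∂(reqMeasure hk Grp hcard gidx)
      = 1 - ∏ j, cA j ^ (nreq gidx j) := by
    rw [hmeas, show (fun ω : Fin T → ℕ => reachInd i ω)
        = fun ω => 1 - ∏ t, fA t (ω t) from funext fun ω => my_reachInd_eq i ω,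
      integral_sub (integrable_const 1) iA, integral_const, hPA]
    simp
  have hEi' : ∫ ω, reachInd i' ω ∂(reqMeasure hk Grp hcard gidx)
      = 1 - ∏ j, cB j ^ (nreq gidx j) := by
    rw [hmeas, show (fun ω : Fin T → ℕ => reachInd i' ω)
        = fun ω => 1 - ∏ t, fB t (ω t) from funext fun ω => my_reachInd_eq i' ω,
      integral_sub (integrable_const 1) iB, integral_const, hPB]
    simp
  have hmulpt : ∀ ω : Fin T → ℕ, reachInd i ω * reachInd i' ω
      = 1 - (∏ t, fA t (ω t)) - (∏ t, fB t (ω t)) + ∏ t, fQ t (ω t) := by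
    intro ω
    have hABQ : (∏ t, fA t (ω t)) * (∏ t, fB t (ω t)) = ∏ t, fQ t (ω t) := by
      rw [← Finset.prod_mul_distrib]
      apply Finset.prod_congr rfl
      intro t _
      by_cases h1 : ω t = i <;> by_cases h2 : ω t = i' <;>
        simp [hfA, hfB, hfQ, h1, h2]
    rw [my_reachInd_eq i ω, my_reachInd_eq i' ω, ← hABQ]
    ring
  have hEii : ∫ ω, reachInd i ω * reachInd i' ω ∂(reqMeasure hk Grp hcard gidx)
      = 1 - (∏ j, cA j ^ (nreq gidx j)) - (∏ j, cB j ^ (nreq gidx j))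
        + ∏ j, cQ j ^ (nreq gidx j) := by
    rw [hmeas, show (fun ω : Fin T → ℕ => reachInd i ω * reachInd i' ω)
        = fun ω => 1 - (∏ t, fA t (ω t)) - (∏ t, fB t (ω t)) + ∏ t, fQ t (ω t)
        from funext hmulpt]
    have h1 : Integrable (fun ω : Fin T → ℕ => (1:ℝ) - ∏ t, fA t (ω t)) (Measure.pi μt) := by
      exact (integrable_const 1).sub iA
    have h2 : Integrable
        (fun ω : Fin T → ℕ => (1:ℝ) - (∏ t, fA t (ω t)) - ∏ t, fB t (ω t)) (Measure.pi μt) := by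
      exact h1.sub iB
    rw [show (fun ω : Fin T → ℕ =>
          1 - (∏ t, fA t (ω t)) - (∏ t, fB t (ω t)) + ∏ t, fQ t (ω t))
        = (fun ω : Fin T → ℕ =>
          (1 - (∏ t, fA t (ω t)) - (∏ t, fB t (ω t))) + ∏ t, fQ t (ω t)) from rfl,
      integral_add h2 iQ, integral_sub h1 iB, integral_sub (integrable_const 1) iA,
      integral_const, hPA, hPB, hPQ]
    simp
  rw [hEi, hEi', hEii]
  -- now pure algebra over groups
  set S := Gset Grp i ∩ Gset Grp i' with hS
  set U := Gset Grp i ∪ Gset Grp i' with hU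
  have hSU : S ⊆ U := Finset.inter_subset_union
  have hmemS : ∀ j, j ∈ S ↔ (i ∈ Grp j ∧ i' ∈ Grp j) := by
    intro j; simp [hS, Gset]
  have hmemU : ∀ j, j ∈ U ↔ (i ∈ Grp j ∨ i' ∈ Grp j) := by
    intro j; simp [hU, Gset]
  have hQval : ∏ j, cQ j ^ (nreq gidx j)
      = (1 - 1/(k:ℝ)) ^ (∑ j ∈ U \ S, nreq gidx j)
        * (1 - 2/(k:ℝ)) ^ (∑ j ∈ S, nreq gidx j) := by
    rw [← Finset.prod_subset (Finset.subset_univ U) (fun j _ hj => by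
      rw [hmemU] at hj; push_neg at hj
      simp [hcQ, hj.1, hj.2])]
    rw [← Finset.prod_sdiff hSU]
    congr 1
    · rw [← Finset.prod_pow_eq_pow_sum]
      apply Finset.prod_congr rfl
      intro j hj
      rw [Finset.mem_sdiff, hmemU, hmemS] at hj
      rcases hj.1 with h | h
      · have h' : i' ∉ Grp j := fun hc => hj.2 ⟨h, hc⟩
        simp [hcQ, h, h']
      · have h' : i ∉ Grp j := fun hc => hj.2 ⟨hc, h⟩
        simp [hcQ, h, h']
    · rw [← Finset.prod_pow_eq_pow_sum]
      apply Finset.prod_congr rfl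
      intro j hj
      rw [hmemS] at hj
      simp only [hcQ, hj.1, hj.2, if_true]
      norm_num
  have hABval : (∏ j, cA j ^ (nreq gidx j)) * (∏ j, cB j ^ (nreq gidx j))
      = (1 - 1/(k:ℝ)) ^ (∑ j ∈ U \ S, nreq gidx j)
        * (1 - 1/(k:ℝ)) ^ (2 * ∑ j ∈ S, nreq gidx j) := by
    rw [← Finset.prod_mul_distrib]
    simp_rw [← mul_pow]
    rw [← Finset.prod_subset (Finset.subset_univ U) (fun j _ hj => by
      rw [hmemU] at hj; push_neg at hj
      simp [hcA, hcB, hj.1, hj.2])]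
    rw [← Finset.prod_sdiff hSU]
    congr 1
    · rw [← Finset.prod_pow_eq_pow_sum]
      apply Finset.prod_congr rfl
      intro j hj
      rw [Finset.mem_sdiff, hmemU, hmemS] at hj
      rcases hj.1 with h | h
      · have h' : i' ∉ Grp j := fun hc => hj.2 ⟨h, hc⟩
        simp [hcA, hcB, h, h']
      · have h' : i ∉ Grp j := fun hc => hj.2 ⟨hc, h⟩
        simp [hcA, hcB, h, h']
    · rw [pow_mul, ← Finset.prod_pow_eq_pow_sum]
      apply Finset.prod_congr rfl
      intro j hj
      rw [hmemS] at hj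
      simp only [hcA, hcB, hj.1, hj.2, if_true]
      ring
  have hg : (1 - (∏ j, cA j ^ (nreq gidx j)) - (∏ j, cB j ^ (nreq gidx j))
        + ∏ j, cQ j ^ (nreq gidx j))
      - (1 - ∏ j, cA j ^ (nreq gidx j)) * (1 - ∏ j, cB j ^ (nreq gidx j))
      = (∏ j, cQ j ^ (nreq gidx j))
        - (∏ j, cA j ^ (nreq gidx j)) * (∏ j, cB j ^ (nreq gidx j)) := by ring
  rw [hg, hQval, hABval]
  ring
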